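/- The space 𝔰𝔬(7) of skew-symmetric 7×7 real matrices decomposes as the internal direct sum 𝔰𝔬(7) = 𝔤₂ ⊕ f_{Φ₀}(ℝ⁷), where 𝔤₂ = {α ∈ 𝔰𝔬(7) : ∑_{b,c} (Φ₀)_{abc} α_{bc} = 0 for every a} and f_{Φ₀}(ℝ⁷) is the image of the map v ↦ v ⌟ Φ₀; that is, these two subspaces intersect trivially and together span 𝔰𝔬(7). -/

import Mathlib

noncomputable section

/-- `tri i j k` is the 3-form `dxᵢ ∧ dxⱼ ∧ dxₖ` on `ℝ⁷` (0-based indices). -/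
def tri (i j k : Fin 7) (u v w : Fin 7 → ℝ) : ℝ :=
  u i * (v j * w k - v k * w j) - u j * (v i * w k - v k * w i)
    + u k * (v i * w j - v j * w i)

/-- The standard `G₂` three-form
`Φ₀ = dx₁₂₃ + dx₁₄₅ + dx₁₆₇ + dx₂₄₆ − dx₂₅₇ − dx₃₄₇ − dx₃₅₆` (written here
with 0-based indices). -/
def phi0 (u v w : Fin 7 → ℝ) : ℝ :=
  tri 0 1 2 u v w + tri 0 3 4 u v w + tri 0 5 6 u v w + tri 1 3 5 u v w
    - tri 1 4 6 u v w - tri 2 3 6 u v w - tri 2 4 5 u v w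

/-- The standard Euclidean inner product on `ℝ⁷`. -/
def ip (u v : Fin 7 → ℝ) : ℝ := ∑ i, u i * v i

/-- Components `(Φ₀)_{abc} = Φ₀(e_a, e_b, e_c)` of the three-form `Φ₀`. -/
def phi0c (a b c : Fin 7) : ℝ :=
  phi0 (Pi.single a 1) (Pi.single b 1) (Pi.single c 1)

/-- The contraction map `f_{Φ₀} : v ↦ v ⌟ Φ₀`, `(f_{Φ₀}(v))_{ab} = Φ₀(v, e_a, e_b)`. -/
def fmat (v : Fin 7 → ℝ) : Matrix (Fin 7) (Fin 7) ℝ :=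
  Matrix.of fun a b => phi0 v (Pi.single a 1) (Pi.single b 1)

/-- The cross product on `ℝ⁷` determined by `⟨u × v, w⟩ = Φ₀(u, v, w)`. -/
def cross7 (u v : Fin 7 → ℝ) : Fin 7 → ℝ := fun a => phi0 u v (Pi.single a 1)

section aux
lemma fm_0_0 (v : Fin 7 → ℝ) : fmat v 0 0 = 0 := by
  simp [fmat, phi0, tri, Pi.single_apply]
lemma fm_0_1 (v : Fin 7 → ℝ) : fmat v 0 1 = v 2 := by
  simp [fmat, phi0, tri, Pi.single_apply]
lemma fm_0_2 (v : Fin 7 → ℝ) : fmat v 0 2 = -v 1 := by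
  simp [fmat, phi0, tri, Pi.single_apply]
lemma fm_0_3 (v : Fin 7 → ℝ) : fmat v 0 3 = v 4 := by
  simp [fmat, phi0, tri, Pi.single_apply]
lemma fm_0_4 (v : Fin 7 → ℝ) : fmat v 0 4 = -v 3 := by
  simp [fmat, phi0, tri, Pi.single_apply]
lemma fm_0_5 (v : Fin 7 → ℝ) : fmat v 0 5 = v 6 := by
  simp [fmat, phi0, tri, Pi.single_apply]
lemma fm_0_6 (v : Fin 7 → ℝ) : fmat v 0 6 = -v 5 := by
  simp [fmat, phi0, tri, Pi.single_apply]
lemma fm_1_0 (v : Fin 7 → ℝ) : fmat v 1 0 = -v 2 := by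
  simp [fmat, phi0, tri, Pi.single_apply]
lemma fm_1_1 (v : Fin 7 → ℝ) : fmat v 1 1 = 0 := by
  simp [fmat, phi0, tri, Pi.single_apply]
lemma fm_1_2 (v : Fin 7 → ℝ) : fmat v 1 2 = v 0 := by
  simp [fmat, phi0, tri, Pi.single_apply]
lemma fm_1_3 (v : Fin 7 → ℝ) : fmat v 1 3 = v 5 := by
  simp [fmat, phi0, tri, Pi.single_apply]
lemma fm_1_4 (v : Fin 7 → ℝ) : fmat v 1 4 = -v 6 := by
  simp [fmat, phi0, tri, Pi.single_apply]
lemma fm_1_5 (v : Fin 7 → ℝ) : fmat v 1 5 = -v 3 := by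
  simp [fmat, phi0, tri, Pi.single_apply]
lemma fm_1_6 (v : Fin 7 → ℝ) : fmat v 1 6 = v 4 := by
  simp [fmat, phi0, tri, Pi.single_apply]
lemma fm_2_0 (v : Fin 7 → ℝ) : fmat v 2 0 = v 1 := by
  simp [fmat, phi0, tri, Pi.single_apply]
lemma fm_2_1 (v : Fin 7 → ℝ) : fmat v 2 1 = -v 0 := by
  simp [fmat, phi0, tri, Pi.single_apply]
lemma fm_2_2 (v : Fin 7 → ℝ) : fmat v 2 2 = 0 := by
  simp [fmat, phi0, tri, Pi.single_apply]
lemma fm_2_3 (v : Fin 7 → ℝ) : fmat v 2 3 = -v 6 := by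
  simp [fmat, phi0, tri, Pi.single_apply]
lemma fm_2_4 (v : Fin 7 → ℝ) : fmat v 2 4 = -v 5 := by
  simp [fmat, phi0, tri, Pi.single_apply]
lemma fm_2_5 (v : Fin 7 → ℝ) : fmat v 2 5 = v 4 := by
  simp [fmat, phi0, tri, Pi.single_apply]
lemma fm_2_6 (v : Fin 7 → ℝ) : fmat v 2 6 = v 3 := by
  simp [fmat, phi0, tri, Pi.single_apply]
lemma fm_3_0 (v : Fin 7 → ℝ) : fmat v 3 0 = -v 4 := by
  simp [fmat, phi0, tri, Pi.single_apply]
lemma fm_3_1 (v : Fin 7 → ℝ) : fmat v 3 1 = -v 5 := by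
  simp [fmat, phi0, tri, Pi.single_apply]
lemma fm_3_2 (v : Fin 7 → ℝ) : fmat v 3 2 = v 6 := by
  simp [fmat, phi0, tri, Pi.single_apply]
lemma fm_3_3 (v : Fin 7 → ℝ) : fmat v 3 3 = 0 := by
  simp [fmat, phi0, tri, Pi.single_apply]
lemma fm_3_4 (v : Fin 7 → ℝ) : fmat v 3 4 = v 0 := by
  simp [fmat, phi0, tri, Pi.single_apply]
lemma fm_3_5 (v : Fin 7 → ℝ) : fmat v 3 5 = v 1 := by
  simp [fmat, phi0, tri, Pi.single_apply]
lemma fm_3_6 (v : Fin 7 → ℝ) : fmat v 3 6 = -v 2 := by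
  simp [fmat, phi0, tri, Pi.single_apply]
lemma fm_4_0 (v : Fin 7 → ℝ) : fmat v 4 0 = v 3 := by
  simp [fmat, phi0, tri, Pi.single_apply]
lemma fm_4_1 (v : Fin 7 → ℝ) : fmat v 4 1 = v 6 := by
  simp [fmat, phi0, tri, Pi.single_apply]
lemma fm_4_2 (v : Fin 7 → ℝ) : fmat v 4 2 = v 5 := by
  simp [fmat, phi0, tri, Pi.single_apply]
lemma fm_4_3 (v : Fin 7 → ℝ) : fmat v 4 3 = -v 0 := by
  simp [fmat, phi0, tri, Pi.single_apply]
lemma fm_4_4 (v : Fin 7 → ℝ) : fmat v 4 4 = 0 := by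
  simp [fmat, phi0, tri, Pi.single_apply]
lemma fm_4_5 (v : Fin 7 → ℝ) : fmat v 4 5 = -v 2 := by
  simp [fmat, phi0, tri, Pi.single_apply]
lemma fm_4_6 (v : Fin 7 → ℝ) : fmat v 4 6 = -v 1 := by
  simp [fmat, phi0, tri, Pi.single_apply]
lemma fm_5_0 (v : Fin 7 → ℝ) : fmat v 5 0 = -v 6 := by
  simp [fmat, phi0, tri, Pi.single_apply]
lemma fm_5_1 (v : Fin 7 → ℝ) : fmat v 5 1 = v 3 := by
  simp [fmat, phi0, tri, Pi.single_apply]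
lemma fm_5_2 (v : Fin 7 → ℝ) : fmat v 5 2 = -v 4 := by
  simp [fmat, phi0, tri, Pi.single_apply]
lemma fm_5_3 (v : Fin 7 → ℝ) : fmat v 5 3 = -v 1 := by
  simp [fmat, phi0, tri, Pi.single_apply]
lemma fm_5_4 (v : Fin 7 → ℝ) : fmat v 5 4 = v 2 := by
  simp [fmat, phi0, tri, Pi.single_apply]
lemma fm_5_5 (v : Fin 7 → ℝ) : fmat v 5 5 = 0 := by
  simp [fmat, phi0, tri, Pi.single_apply]
lemma fm_5_6 (v : Fin 7 → ℝ) : fmat v 5 6 = v 0 := by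
  simp [fmat, phi0, tri, Pi.single_apply]
lemma fm_6_0 (v : Fin 7 → ℝ) : fmat v 6 0 = v 5 := by
  simp [fmat, phi0, tri, Pi.single_apply]
lemma fm_6_1 (v : Fin 7 → ℝ) : fmat v 6 1 = -v 4 := by
  simp [fmat, phi0, tri, Pi.single_apply]
lemma fm_6_2 (v : Fin 7 → ℝ) : fmat v 6 2 = -v 3 := by
  simp [fmat, phi0, tri, Pi.single_apply]
lemma fm_6_3 (v : Fin 7 → ℝ) : fmat v 6 3 = v 2 := by
  simp [fmat, phi0, tri, Pi.single_apply]
lemma fm_6_4 (v : Fin 7 → ℝ) : fmat v 6 4 = v 1 := by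
  simp [fmat, phi0, tri, Pi.single_apply]
lemma fm_6_5 (v : Fin 7 → ℝ) : fmat v 6 5 = -v 0 := by
  simp [fmat, phi0, tri, Pi.single_apply]
lemma fm_6_6 (v : Fin 7 → ℝ) : fmat v 6 6 = 0 := by
  simp [fmat, phi0, tri, Pi.single_apply]

lemma phi0c_eq (a b c : Fin 7) : phi0c a b c = fmat (Pi.single a 1) b c := rfl

lemma key1_0 (v : Fin 7 → ℝ) : ∑ b, ∑ c, phi0c 0 b c * fmat v b c = 6 * v 0 := by
  simp only [Fin.sum_univ_seven, phi0c_eq, fm_0_0, fm_0_1, fm_0_2, fm_0_3, fm_0_4, fm_0_5, fm_0_6, fm_1_0, fm_1_1, fm_1_2, fm_1_3, fm_1_4, fm_1_5, fm_1_6, fm_2_0, fm_2_1, fm_2_2, fm_2_3, fm_2_4, fm_2_5, fm_2_6, fm_3_0, fm_3_1, fm_3_2, fm_3_3, fm_3_4, fm_3_5, fm_3_6, fm_4_0, fm_4_1, fm_4_2, fm_4_3, fm_4_4, fm_4_5, fm_4_6, fm_5_0, fm_5_1, fm_5_2, fm_5_3, fm_5_4, fm_5_5, fm_5_6, fm_6_0,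 fm_6_1, fm_6_2, fm_6_3, fm_6_4, fm_6_5, fm_6_6, Pi.single_apply, Fin.reduceEq, reduceIte]
  ring

lemma key1_1 (v : Fin 7 → ℝ) : ∑ b, ∑ c, phi0c 1 b c * fmat v b c = 6 * v 1 := by
  simp only [Fin.sum_univ_seven, phi0c_eq, fm_0_0, fm_0_1, fm_0_2, fm_0_3, fm_0_4, fm_0_5, fm_0_6, fm_1_0, fm_1_1, fm_1_2, fm_1_3, fm_1_4, fm_1_5, fm_1_6, fm_2_0, fm_2_1, fm_2_2, fm_2_3, fm_2_4, fm_2_5, fm_2_6, fm_3_0, fm_3_1, fm_3_2, fm_3_3, fm_3_4, fm_3_5, fm_3_6, fm_4_0, fm_4_1, fm_4_2, fm_4_3, fm_4_4, fm_4_5, fm_4_6, fm_5_0, fm_5_1, fm_5_2, fm_5_3, fm_5_4, fm_5_5, fm_5_6, fm_6_0, fm_6_1, fm_6_2, fm_6_3, fm_6_4, fm_6_5, fm_6_6, Pi.single_apply, Fin.reduceEq, reduceIte]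
  ring

lemma key1_2 (v : Fin 7 → ℝ) : ∑ b, ∑ c, phi0c 2 b c * fmat v b c = 6 * v 2 := by
  simp only [Fin.sum_univ_seven, phi0c_eq, fm_0_0, fm_0_1, fm_0_2, fm_0_3, fm_0_4, fm_0_5, fm_0_6, fm_1_0, fm_1_1, fm_1_2, fm_1_3, fm_1_4, fm_1_5, fm_1_6, fm_2_0, fm_2_1, fm_2_2, fm_2_3, fm_2_4, fm_2_5, fm_2_6, fm_3_0, fm_3_1, fm_3_2, fm_3_3, fm_3_4, fm_3_5, fm_3_6, fm_4_0, fm_4_1, fm_4_2, fm_4_3, fm_4_4, fm_4_5, fm_4_6, fm_5_0, fm_5_1, fm_5_2, fm_5_3, fm_5_4, fm_5_5, fm_5_6, fm_6_0, fm_6_1, fm_6_2, fm_6_3, fm_6_4, fm_6_5, fm_6_6, Pi.single_apply, Fin.reduceEq, reduceIte]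
  ring

lemma key1_3 (v : Fin 7 → ℝ) : ∑ b, ∑ c, phi0c 3 b c * fmat v b c = 6 * v 3 := by
  simp only [Fin.sum_univ_seven, phi0c_eq, fm_0_0, fm_0_1, fm_0_2, fm_0_3, fm_0_4, fm_0_5, fm_0_6, fm_1_0, fm_1_1, fm_1_2, fm_1_3, fm_1_4, fm_1_5, fm_1_6, fm_2_0, fm_2_1, fm_2_2, fm_2_3, fm_2_4, fm_2_5, fm_2_6, fm_3_0, fm_3_1, fm_3_2, fm_3_3, fm_3_4, fm_3_5, fm_3_6, fm_4_0, fm_4_1, fm_4_2, fm_4_3, fm_4_4, fm_4_5, fm_4_6, fm_5_0, fm_5_1, fm_5_2, fm_5_3, fm_5_4, fm_5_5, fm_5_6, fm_6_0, fm_6_1, fm_6_2, fm_6_3, fm_6_4, fm_6_5, fm_6_6, Pi.single_apply, Fin.reduceEq, reduceIte]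
  ring

lemma key1_4 (v : Fin 7 → ℝ) : ∑ b, ∑ c, phi0c 4 b c * fmat v b c = 6 * v 4 := by
  simp only [Fin.sum_univ_seven, phi0c_eq, fm_0_0, fm_0_1, fm_0_2, fm_0_3, fm_0_4, fm_0_5, fm_0_6, fm_1_0, fm_1_1, fm_1_2, fm_1_3, fm_1_4, fm_1_5, fm_1_6, fm_2_0, fm_2_1, fm_2_2, fm_2_3, fm_2_4, fm_2_5, fm_2_6, fm_3_0, fm_3_1, fm_3_2, fm_3_3, fm_3_4, fm_3_5, fm_3_6, fm_4_0, fm_4_1, fm_4_2, fm_4_3, fm_4_4, fm_4_5, fm_4_6, fm_5_0, fm_5_1, fm_5_2, fm_5_3, fm_5_4, fm_5_5, fm_5_6, fm_6_0, fm_6_1, fm_6_2, fm_6_3, fm_6_4, fm_6_5, fm_6_6, Pi.single_apply, Fin.reduceEq, reduceIte]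
  ring

lemma key1_5 (v : Fin 7 → ℝ) : ∑ b, ∑ c, phi0c 5 b c * fmat v b c = 6 * v 5 := by
  simp only [Fin.sum_univ_seven, phi0c_eq, fm_0_0, fm_0_1, fm_0_2, fm_0_3, fm_0_4, fm_0_5, fm_0_6, fm_1_0, fm_1_1, fm_1_2, fm_1_3, fm_1_4, fm_1_5, fm_1_6, fm_2_0, fm_2_1, fm_2_2, fm_2_3, fm_2_4, fm_2_5, fm_2_6, fm_3_0, fm_3_1, fm_3_2, fm_3_3, fm_3_4, fm_3_5, fm_3_6, fm_4_0, fm_4_1, fm_4_2, fm_4_3, fm_4_4, fm_4_5, fm_4_6, fm_5_0, fm_5_1, fm_5_2, fm_5_3, fm_5_4, fm_5_5, fm_5_6, fm_6_0, fm_6_1, fm_6_2, fm_6_3, fm_6_4, fm_6_5, fm_6_6, Pi.single_apply, Fin.reduceEq, reduceIte]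
  ring

lemma key1_6 (v : Fin 7 → ℝ) : ∑ b, ∑ c, phi0c 6 b c * fmat v b c = 6 * v 6 := by
  simp only [Fin.sum_univ_seven, phi0c_eq, fm_0_0, fm_0_1, fm_0_2, fm_0_3, fm_0_4, fm_0_5, fm_0_6, fm_1_0, fm_1_1, fm_1_2, fm_1_3, fm_1_4, fm_1_5, fm_1_6, fm_2_0, fm_2_1, fm_2_2, fm_2_3, fm_2_4, fm_2_5, fm_2_6, fm_3_0, fm_3_1, fm_3_2, fm_3_3, fm_3_4, fm_3_5, fm_3_6, fm_4_0, fm_4_1, fm_4_2, fm_4_3, fm_4_4, fm_4_5, fm_4_6, fm_5_0, fm_5_1, fm_5_2, fm_5_3, fm_5_4, fm_5_5, fm_5_6, fm_6_0, fm_6_1, fm_6_2, fm_6_3, fm_6_4, fm_6_5, fm_6_6, Pi.single_apply, Fin.reduceEq, reduceIte]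
  ring

/-- Key contraction identity: `∑_{b,c} (Φ₀)_{abc} (f_{Φ₀}(v))_{bc} = 6 v_a`. -/
lemma key1 (v : Fin 7 → ℝ) (a : Fin 7) :
    ∑ b, ∑ c, phi0c a b c * fmat v b c = 6 * v a := by
  fin_cases a
  exacts [key1_0 v, key1_1 v, key1_2 v, key1_3 v, key1_4 v, key1_5 v, key1_6 v]

lemma phi0_swap (u x y : Fin 7 → ℝ) : phi0 u y x = -phi0 u x y := by
  simp only [phi0, tri]; ring

lemma fmat_skew (v : Fin 7 → ℝ) : (fmat v).transpose = -(fmat v) := by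
  ext a b
  simp only [Matrix.transpose_apply, Matrix.neg_apply, fmat, Matrix.of_apply]
  exact phi0_swap v _ _

lemma fmat_add (u v : Fin 7 → ℝ) : fmat (u + v) = fmat u + fmat v := by
  ext a b
  simp only [fmat, Matrix.of_apply, Matrix.add_apply, phi0, tri, Pi.add_apply]
  ring

lemma fmat_smul (c : ℝ) (v : Fin 7 → ℝ) : fmat (c • v) = c • fmat v := by
  ext a b
  simp only [fmat, Matrix.of_apply, Matrix.smul_apply, phi0, tri, Pi.smul_apply, smul_eq_mul]
  ring

/-- `f_{Φ₀}` as a linear map. -/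
def fmatL : (Fin 7 → ℝ) →ₗ[ℝ] Matrix (Fin 7) (Fin 7) ℝ where
  toFun := fmat
  map_add' := fmat_add
  map_smul' := fmat_smul

/-- The Lie algebra `𝔤₂` as a submodule of matrices. -/
def g2 : Submodule ℝ (Matrix (Fin 7) (Fin 7) ℝ) where
  carrier := {α | α.transpose = -α ∧ ∀ a, ∑ b, ∑ c, phi0c a b c * α b c = 0}
  add_mem' := by
    rintro α β ⟨hα1, hα2⟩ ⟨hβ1, hβ2⟩
    refine ⟨by rw [Matrix.transpose_add, hα1, hβ1]; abel, fun a => ?_⟩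
    simp only [Matrix.add_apply, mul_add, Finset.sum_add_distrib, hα2 a, hβ2 a, add_zero]
  zero_mem' := ⟨by simp, fun a => by simp⟩
  smul_mem' := by
    rintro c α ⟨hα1, hα2⟩
    refine ⟨by rw [Matrix.transpose_smul, hα1, smul_neg], fun a => ?_⟩
    simp only [Matrix.smul_apply, smul_eq_mul]
    calc ∑ b, ∑ c', phi0c a b c' * (c * α b c')
        = c * ∑ b, ∑ c', phi0c a b c' * α b c' := by
          rw [Finset.mul_sum]; refine Finset.sum_congr rfl fun b _ => ?_
          rw [Finset.mul_sum]; refine Finset.sum_congr rfl fun c' _ => ?_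
          ring
      _ = 0 := by rw [hα2 a, mul_zero]

/-- The space of skew-symmetric matrices as a submodule. -/
def so7 : Submodule ℝ (Matrix (Fin 7) (Fin 7) ℝ) where
  carrier := {α | α.transpose = -α}
  add_mem' := by
    intro α β hα hβ
    simp only [Set.mem_setOf_eq] at *
    rw [Matrix.transpose_add, hα, hβ]; abel
  zero_mem' := by simp
  smul_mem' := by
    intro c α hα
    simp only [Set.mem_setOf_eq] at *
    rw [Matrix.transpose_smul, hα, smul_neg]

end aux

/-- `𝔰𝔬(7)` decomposes as the internal direct sum
`𝔰𝔬(7) = 𝔤₂ ⊕ f_{Φ₀}(ℝ⁷)`. -/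
theorem stmt9 : ∃ S T U : Submodule ℝ (Matrix (Fin 7) (Fin 7) ℝ),
    (S : Set (Matrix (Fin 7) (Fin 7) ℝ)) =
      {α | α.transpose = -α ∧ ∀ a, ∑ b, ∑ c, phi0c a b c * α b c = 0} ∧
    (T : Set (Matrix (Fin 7) (Fin 7) ℝ)) = {m | ∃ v : Fin 7 → ℝ, m = fmat v} ∧
    (U : Set (Matrix (Fin 7) (Fin 7) ℝ)) = {α | α.transpose = -α} ∧
    S ⊓ T = ⊥ ∧ S ⊔ T = U := by
  refine ⟨g2, LinearMap.range fmatL, so7, rfl, ?_, rfl, ?_, ?_⟩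
  · ext m
    simp only [SetLike.mem_coe, LinearMap.mem_range, Set.mem_setOf_eq]
    constructor
    · rintro ⟨v, hv⟩; exact ⟨v, hv.symm⟩
    · rintro ⟨v, hv⟩; exact ⟨v, hv.symm⟩
  · -- trivial intersection
    rw [eq_bot_iff]
    rintro α ⟨hS, hT⟩
    obtain ⟨v, rfl⟩ : ∃ v, fmatL v = α := hT
    obtain ⟨-, h2⟩ := hS
    have hv : v = 0 := by
      funext a
      have hk := key1 v a
      rw [show (∑ b, ∑ c, phi0c a b c * fmat v b c) = 0 from h2 a] at hk
      have h6 : (6 : ℝ) * v a = 0 := hk.symm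
      have hva : v a = 0 := by linarith
      simpa using hva
    rw [Submodule.mem_bot]
    show fmat v = 0
    rw [hv]
    ext a b
    simp [fmat, phi0, tri]
  · -- span
    apply le_antisymm
    · apply sup_le
      · rintro α ⟨h1, -⟩; exact h1
      · rintro α ⟨v, rfl⟩
        exact fmat_skew v
    · intro α hα
      set v : Fin 7 → ℝ := fun a => (∑ b, ∑ c, phi0c a b c * α b c) / 6 with hv
      have hfv : fmatL v ∈ LinearMap.range fmatL := ⟨v, rfl⟩
      have hsub : α - fmatL v ∈ g2 := by
        constructor
        · show (α - fmat v).transpose = -(α - fmat v)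
          rw [Matrix.transpose_sub, hα, fmat_skew]
          abel
        · intro a
          have hk := key1 v a
          have hsplit : ∑ b, ∑ c, phi0c a b c * (α - fmatL v) b c
              = (∑ b, ∑ c, phi0c a b c * α b c) - ∑ b, ∑ c, phi0c a b c * fmat v b c := by
            rw [← Finset.sum_sub_distrib]
            refine Finset.sum_congr rfl fun b _ => ?_
            rw [← Finset.sum_sub_distrib]
            refine Finset.sum_congr rfl fun c _ => ?_
            show phi0c a b c * (α b c - fmat v b c) = _
            ring
          rw [hsplit, hk, hv]
          field_simp
          ring
      have hdecomp : α = (α - fmatL v) + fmatL v := by abel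
      rw [hdecomp]
      exact Submodule.add_mem_sup hsub hfv

end
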